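/- Let X be a mixture set, n a positive integer, and ≽ a binary relation on X^n. Then ≽ satisfies axioms F1–F5 if and only if there exists a pair (u, w) providing an AA representation for ≽ on X^n. -/

import Mathlib

/-- A mixture set: a set `X` with an operation `mix x l y` (written `xλy` in the paper),
satisfying the Herstein–Milnor axioms for `l, m ∈ [0,1]`. -/
structure MixtureSpace (X : Type*) where
  mix : X → ℝ → X → X
  mix_one : ∀ x y : X, mix x 1 y = x
  mix_comm : ∀ (x y : X), ∀ l ∈ Set.Icc (0:ℝ) 1, mix x l y = mix y (1 - l) x
  mix_assoc : ∀ (x y : X), ∀ l ∈ Set.Icc (0:ℝ) 1, ∀ m ∈ Set.Icc (0:ℝ) 1,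
    mix (mix x m y) l y = mix x (l * m) y

/-- `u : X → ℝ` is mixture linear. -/
def MixtureSpace.linear {X : Type*} (M : MixtureSpace X) (u : X → ℝ) : Prop :=
  ∀ (x y : X), ∀ l ∈ Set.Icc (0:ℝ) 1, u (M.mix x l y) = l * u x + (1 - l) * u y

/-- Strict (asymmetric) part of a relation. -/
def strictP {α : Type*} (R : α → α → Prop) (x y : α) : Prop := R x y ∧ ¬ R y x

/-- Componentwise mixture of finite streams. -/
def mixStream {X : Type*} (M : MixtureSpace X) {n : ℕ} (x : Fin n → X) (l : ℝ)
    (y : Fin n → X) : Fin n → X := fun t => M.mix (x t) l (y t)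

/-- Componentwise mixture of infinite streams. -/
def mixSeq {X : Type*} (M : MixtureSpace X) (x : ℕ → X) (l : ℝ) (y : ℕ → X) :
    ℕ → X := fun t => M.mix (x t) l (y t)

/-! ### Finite-horizon axioms -/

/-- F1: weak order (complete and transitive). -/
def AxF1 {X : Type*} {n : ℕ} (R : (Fin n → X) → (Fin n → X) → Prop) : Prop :=
  (∀ x y, R x y ∨ R y x) ∧ Transitive R

/-- F2: non-triviality (a ≻ b for some a, b in the induced relation). -/
def AxF2 {X : Type*} {n : ℕ} (R : (Fin n → X) → (Fin n → X) → Prop) : Prop :=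
  ∃ a b : X, strictP R (fun _ => a) (fun _ => b)

/-- F3: mixture independence. -/
def AxF3 {X : Type*} (M : MixtureSpace X) {n : ℕ}
    (R : (Fin n → X) → (Fin n → X) → Prop) : Prop :=
  ∀ x y z : Fin n → X, ∀ l ∈ Set.Ioo (0:ℝ) 1,
    (R x y ↔ R (mixStream M x l z) (mixStream M y l z))

/-- F4: mixture continuity. -/
def AxF4 {X : Type*} (M : MixtureSpace X) {n : ℕ}
    (R : (Fin n → X) → (Fin n → X) → Prop) : Prop :=
  ∀ x y z : Fin n → X,
    IsClosed {l : ℝ | l ∈ Set.Icc (0:ℝ) 1 ∧ R (mixStream M x l z) y} ∧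
    IsClosed {l : ℝ | l ∈ Set.Icc (0:ℝ) 1 ∧ R y (mixStream M x l z)}

/-- F5: monotonicity. -/
def AxF5 {X : Type*} {n : ℕ} (R : (Fin n → X) → (Fin n → X) → Prop) : Prop :=
  ∀ x y : Fin n → X, (∀ t, R (fun _ => x t) (fun _ => y t)) → R x y

/-- `(u, w)` provides an AA representation for `R` on `X^n`. -/
def AARep {X : Type*} (M : MixtureSpace X) {n : ℕ}
    (R : (Fin n → X) → (Fin n → X) → Prop) (u : X → ℝ) (w : Fin n → ℝ) : Prop :=
  M.linear u ∧ (∃ a b : X, u a ≠ u b) ∧ (∀ t, 0 ≤ w t) ∧ (∃ t, 0 < w t) ∧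
  ∀ x y : Fin n → X, (R x y ↔ (∑ t, w t * u (x t)) ≥ ∑ t, w t * u (y t))

/-! ### Infinite-horizon notions -/

/-- Ultimately constant stream (equals `x0` from some period on). -/
def UltConst {X : Type*} (x0 : X) (x : ℕ → X) : Prop := ∃ T, ∀ t, T ≤ t → x t = x0

/-- Member of `X**`: ultimately constant or constant. -/
def InXSS {X : Type*} (x0 : X) (x : ℕ → X) : Prop :=
  UltConst x0 x ∨ ∃ a, ∀ t, x t = a

/-- `[a]_k`: the stream with `a` in period `k` and `x0` elsewhere. -/
def bracket {X : Type*} (x0 : X) (a : X) (k : ℕ) : ℕ → X :=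
  fun t => if t = k then a else x0

/-- `(x₁, …, x_{k−1}, a, x_{k+1}, …, x_T, x0, x0, …)`. -/
def truncMod {X : Type*} (x0 : X) (x : ℕ → X) (k : ℕ) (a : X) (T : ℕ) : ℕ → X :=
  fun t => if t = k then a else if t ≤ T then x t else x0

/-- I1: weak order. -/
def AxI1 {X : Type*} (R : (ℕ → X) → (ℕ → X) → Prop) : Prop :=
  (∀ x y, R x y ∨ R y x) ∧ Transitive R

/-- I2: non-triviality `a ≻ x0 ≻ b` in the induced relation. -/
def AxI2 {X : Type*} (x0 : X) (R : (ℕ → X) → (ℕ → X) → Prop) : Prop :=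
  ∃ a b : X, strictP R (fun _ => a) (fun _ => x0) ∧ strictP R (fun _ => x0) (fun _ => b)

/-- I3: mixture independence on `X**`. -/
def AxI3 {X : Type*} (M : MixtureSpace X) (x0 : X)
    (R : (ℕ → X) → (ℕ → X) → Prop) : Prop :=
  ∀ x y z : ℕ → X, InXSS x0 x → InXSS x0 y → InXSS x0 z →
    ∀ l ∈ Set.Ioo (0:ℝ) 1, (R x y ↔ R (mixSeq M x l z) (mixSeq M y l z))

/-- I4: mixture continuity. -/
def AxI4 {X : Type*} (M : MixtureSpace X) (x0 : X)
    (R : (ℕ → X) → (ℕ → X) → Prop) : Prop :=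
  ∀ x z : ℕ → X, InXSS x0 x → InXSS x0 z → ∀ y : ℕ → X,
    IsClosed {l : ℝ | l ∈ Set.Icc (0:ℝ) 1 ∧ R (mixSeq M x l z) y} ∧
    IsClosed {l : ℝ | l ∈ Set.Icc (0:ℝ) 1 ∧ R y (mixSeq M x l z)}

/-- I5: monotonicity. -/
def AxI5 {X : Type*} (R : (ℕ → X) → (ℕ → X) → Prop) : Prop :=
  ∀ x y : ℕ → X, (∀ t, R (fun _ => x t) (fun _ => y t)) → R x y

/-- I6: convergence. -/
def AxI6 {X : Type*} (x0 : X) (R : (ℕ → X) → (ℕ → X) → Prop) : Prop :=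
  ∀ (x : ℕ → X) (a : X) (k : ℕ),
    (strictP R (bracket x0 a k) (bracket x0 (x k) k) →
      ∃ Tp, k ≤ Tp ∧ ∀ T, Tp ≤ T → R (truncMod x0 x k a T) x) ∧
    (strictP R (bracket x0 (x k) k) (bracket x0 a k) →
      ∃ Tm, k ≤ Tm ∧ ∀ T, Tm ≤ T → R x (truncMod x0 x k a T))

/-- `(u, w)` provides an AA representation for `R` on `X^∞` (with its
discounted-utility series converging for every stream). -/
def AARepInf {X : Type*} (M : MixtureSpace X)
    (R : (ℕ → X) → (ℕ → X) → Prop) (u : X → ℝ) (w : ℕ → ℝ) : Prop :=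
  M.linear u ∧ (∃ a b : X, u a ≠ u b) ∧ (∀ t, 0 ≤ w t) ∧ (∃ t, 0 < w t) ∧
  ∃ U : (ℕ → X) → ℝ,
    (∀ x : ℕ → X, Filter.Tendsto (fun N => ∑ t ∈ Finset.range N, w t * u (x t))
      Filter.atTop (nhds (U x))) ∧
    ∀ x y : ℕ → X, (R x y ↔ U x ≥ U y)

/-! ### Exponential discounting -/

/-- F2′: essentiality of period 1. -/
def AxF2' {X : Type*} {n : ℕ} (R : (Fin n → X) → (Fin n → X) → Prop)
    (h0 : 0 < n) : Prop :=
  ∃ (a b : X) (x : Fin n → X),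
    strictP R (Function.update x ⟨0, h0⟩ a) (Function.update x ⟨0, h0⟩ b)

/-- F6: impatience. -/
def AxF6 {X : Type*} {n : ℕ} (R : (Fin n → X) → (Fin n → X) → Prop)
    (h0 : 0 < n) (h1 : 1 < n) : Prop :=
  ∀ a b : X, strictP R (fun _ => a) (fun _ => b) →
    ∀ x : Fin n → X,
      strictP R (Function.update (Function.update x ⟨0, h0⟩ a) ⟨1, h1⟩ b)
               (Function.update (Function.update x ⟨0, h0⟩ b) ⟨1, h1⟩ a)

/-- `(x₂, …, xₙ, a)`. -/
def shiftApp {X : Type*} {n : ℕ} (x : Fin n → X) (a : X) : Fin n → X :=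
  fun t => if h : (t : ℕ) + 1 < n then x ⟨(t : ℕ) + 1, h⟩ else a

/-- F7: stationarity. -/
def AxF7 {X : Type*} {n : ℕ} (R : (Fin n → X) → (Fin n → X) → Prop)
    (h0 : 0 < n) : Prop :=
  ∀ (a : X) (x y : Fin n → X),
    (R (Function.update x ⟨0, h0⟩ a) (Function.update y ⟨0, h0⟩ a) ↔
     R (shiftApp x a) (shiftApp y a))

/-- `(u, δ)` provides an exponentially discounted expected utility representation. -/
def ExpRep {X : Type*} (M : MixtureSpace X) {n : ℕ}
    (R : (Fin n → X) → (Fin n → X) → Prop) (u : X → ℝ) (δ : ℝ) : Prop :=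
  M.linear u ∧ (∃ a b : X, u a ≠ u b) ∧ δ ∈ Set.Ioo (0:ℝ) 1 ∧
  ∀ x y : Fin n → X,
    (R x y ↔ (∑ t : Fin n, δ ^ (t : ℕ) * u (x t)) ≥ ∑ t : Fin n, δ ^ (t : ℕ) * u (y t))

/-- I2′: essentiality of period 1 (infinite horizon). -/
def AxI2' {X : Type*} (x0 : X) (R : (ℕ → X) → (ℕ → X) → Prop) : Prop :=
  ∃ a b : X, strictP R (bracket x0 a 0) (fun _ => x0) ∧
    strictP R (fun _ => x0) (bracket x0 b 0)

/-- `(a, x₁, x₂, …)`. -/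
def consSeq {X : Type*} (a : X) (x : ℕ → X) : ℕ → X :=
  fun t => if t = 0 then a else x (t - 1)

/-- I7: stationarity (infinite horizon). -/
def AxI7 {X : Type*} (R : (ℕ → X) → (ℕ → X) → Prop) : Prop :=
  ∀ (a : X) (x y : ℕ → X), (R (consSeq a x) (consSeq a y) ↔ R x y)

/-- `(u, δ)` provides an exponentially discounted expected utility representation
on `X^∞`, with converging series. -/
def ExpRepInf {X : Type*} (M : MixtureSpace X)
    (R : (ℕ → X) → (ℕ → X) → Prop) (u : X → ℝ) (δ : ℝ) : Prop :=
  M.linear u ∧ (∃ a b : X, u a ≠ u b) ∧ δ ∈ Set.Ioo (0:ℝ) 1 ∧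
  ∃ U : (ℕ → X) → ℝ,
    (∀ x : ℕ → X, Filter.Tendsto (fun N => ∑ t ∈ Finset.range N, δ ^ t * u (x t))
      Filter.atTop (nhds (U x))) ∧
    ∀ x y : ℕ → X, (R x y ↔ U x ≥ U y)

/-! ### Semi-hyperbolic discounting -/

/-- The SH(T) discount function at (1-based) period `t`:
`D 1 = 1`, `D t = β₁⋯β_{t−1} δ^{t−1}` for `2 ≤ t ≤ T`,
`D t = β₁⋯β_{T−1} δ^{t−1}` for `t > T`. -/
noncomputable def SHD (T : ℕ) (β : ℕ → ℝ) (δ : ℝ) (t : ℕ) : ℝ :=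
  (∏ i ∈ Finset.Icc 1 (min t T - 1), β i) * δ ^ (t - 1)

/-- Parameter restrictions: `0 < β₁ ≤ … ≤ β_{T−1} ≤ 1` and `δ ∈ (0,1)`. -/
def SHParams (T : ℕ) (β : ℕ → ℝ) (δ : ℝ) : Prop :=
  (∀ i : ℕ, 1 ≤ i → i ≤ T - 1 → 0 < β i ∧ β i ≤ 1) ∧
  (∀ i : ℕ, 1 ≤ i → i + 1 ≤ T - 1 → β i ≤ β (i + 1)) ∧
  δ ∈ Set.Ioo (0:ℝ) 1

/-- `(u, β, δ)` provides an SH(T) discounted expected utility representation on `X^n`. -/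
def SHRep {X : Type*} (M : MixtureSpace X) {n : ℕ}
    (R : (Fin n → X) → (Fin n → X) → Prop)
    (T : ℕ) (β : ℕ → ℝ) (δ : ℝ) (u : X → ℝ) : Prop :=
  M.linear u ∧ (∃ a b : X, u a ≠ u b) ∧ SHParams T β δ ∧
  ∀ x y : Fin n → X,
    (R x y ↔ (∑ s : Fin n, SHD T β δ ((s : ℕ) + 1) * u (x s)) ≥
      ∑ s : Fin n, SHD T β δ ((s : ℕ) + 1) * u (y s))

/-- F2″: essentiality of (1-based) periods `1, …, T`. -/
def AxF2'' {X : Type*} {n : ℕ} (R : (Fin n → X) → (Fin n → X) → Prop)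
    (T : ℕ) (hTn : T ≤ n) : Prop :=
  ∃ (a b : X) (x : Fin n → X), ∀ i : ℕ, ∀ hi : i < T,
    strictP R (Function.update x ⟨i, lt_of_lt_of_le hi hTn⟩ a)
             (Function.update x ⟨i, lt_of_lt_of_le hi hTn⟩ b)

/-- F6′: impatience between (1-based) periods `T` and `T+1`. -/
def AxF6' {X : Type*} {n : ℕ} (R : (Fin n → X) → (Fin n → X) → Prop)
    (T : ℕ) (h1 : T - 1 < n) (h2 : T < n) : Prop :=
  ∀ a b : X, strictP R (fun _ => a) (fun _ => b) →
    ∀ x : Fin n → X,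
      strictP R (Function.update (Function.update x ⟨T-1, h1⟩ a) ⟨T, h2⟩ b)
               (Function.update (Function.update x ⟨T-1, h1⟩ b) ⟨T, h2⟩ a)

/-- Delete (0-based) coordinate `i`, shift the rest left, and append `a` at the end. -/
def delIns {X : Type*} {n : ℕ} (x : Fin n → X) (i : ℕ) (a : X) : Fin n → X :=
  fun s => if (s : ℕ) < i then x s
    else if h : (s : ℕ) + 1 < n then x ⟨(s : ℕ) + 1, h⟩ else a

/-- F7′: stationarity from (1-based) period `T`. -/
def AxF7' {X : Type*} {n : ℕ} (R : (Fin n → X) → (Fin n → X) → Prop)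
    (T : ℕ) (h1 : T - 1 < n) : Prop :=
  ∀ (a : X) (x y : Fin n → X), (∀ s : Fin n, (s : ℕ) < T - 1 → x s = y s) →
    (R (Function.update x ⟨T-1, h1⟩ a) (Function.update y ⟨T-1, h1⟩ a) ↔
     R (delIns x (T-1) a) (delIns y (T-1) a))

/-- `(x₁, …, x_{t−2}, a, b, x_{t+2}, …, xₙ, x_{t−1})` where `i` is the 0-based
index of period `t` (so `i = t − 1`). -/
def ebShiftFin {X : Type*} {n : ℕ} (x : Fin n → X) (i : ℕ) (hi : i - 1 < n)
    (a b : X) : Fin n → X :=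
  fun s => if (s : ℕ) < i - 1 then x s
    else if (s : ℕ) = i - 1 then a
    else if (s : ℕ) = i then b
    else if h : (s : ℕ) + 1 < n then x ⟨(s : ℕ) + 1, h⟩
    else x ⟨i - 1, hi⟩

/-- F8: early bias. -/
def AxF8 {X : Type*} {n : ℕ} (R : (Fin n → X) → (Fin n → X) → Prop)
    (T : ℕ) (hTn : T < n) : Prop :=
  ∀ a b c d : X,
    strictP R (fun _ => a) (fun _ => c) → strictP R (fun _ => d) (fun _ => b) →
    ∀ x : Fin n → X, ∀ i : ℕ, ∀ hi1 : 1 ≤ i, ∀ hi2 : i ≤ T - 1,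
      (R (Function.update (Function.update x ⟨i, by omega⟩ a) ⟨i+1, by omega⟩ b)
         (Function.update (Function.update x ⟨i, by omega⟩ c) ⟨i+1, by omega⟩ d) ∧
       R (Function.update (Function.update x ⟨i, by omega⟩ c) ⟨i+1, by omega⟩ d)
         (Function.update (Function.update x ⟨i, by omega⟩ a) ⟨i+1, by omega⟩ b)) →
      R (ebShiftFin x i (by omega) a b) (ebShiftFin x i (by omega) c d)

/-- `(u, β, δ)` provides an SH(T) discounted expected utility representation on `X^∞`. -/
def SHRepInf {X : Type*} (M : MixtureSpace X)
    (R : (ℕ → X) → (ℕ → X) → Prop)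
    (T : ℕ) (β : ℕ → ℝ) (δ : ℝ) (u : X → ℝ) : Prop :=
  M.linear u ∧ (∃ a b : X, u a ≠ u b) ∧ SHParams T β δ ∧
  ∃ U : (ℕ → X) → ℝ,
    (∀ x : ℕ → X, Filter.Tendsto
      (fun N => ∑ t ∈ Finset.range N, SHD T β δ (t + 1) * u (x t))
      Filter.atTop (nhds (U x))) ∧
    ∀ x y : ℕ → X, (R x y ↔ U x ≥ U y)

/-- I2″: essentiality of (1-based) periods `1, …, T`. -/
def AxI2'' {X : Type*} (x0 : X) (R : (ℕ → X) → (ℕ → X) → Prop) (T : ℕ) : Prop :=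
  ∃ a b : X, ∀ t : ℕ, t < T →
    strictP R (bracket x0 a t) (fun _ => x0) ∧ strictP R (fun _ => x0) (bracket x0 b t)

/-- Delete (0-based) coordinate `i` of an infinite stream. -/
def delSeq {X : Type*} (x : ℕ → X) (i : ℕ) : ℕ → X :=
  fun t => if t < i then x t else x (t + 1)

/-- I7′: stationarity from (1-based) period `T`. -/
def AxI7' {X : Type*} (R : (ℕ → X) → (ℕ → X) → Prop) (T : ℕ) : Prop :=
  ∀ (a : X) (x y : ℕ → X), (∀ t, t < T - 1 → x t = y t) →
    (R (Function.update x (T-1) a) (Function.update y (T-1) a) ↔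
     R (delSeq x (T-1)) (delSeq y (T-1)))

/-- `(x₁, …, x_{t−2}, a, b, x_{t+2}, …)` where `i = t − 1` (0-based index of period `t`). -/
def ebShiftSeq {X : Type*} (x : ℕ → X) (i : ℕ) (a b : X) : ℕ → X :=
  fun s => if s < i - 1 then x s
    else if s = i - 1 then a
    else if s = i then b
    else x (s + 1)

/-- I8: early bias (infinite horizon). -/
def AxI8 {X : Type*} (R : (ℕ → X) → (ℕ → X) → Prop) (T : ℕ) : Prop :=
  ∀ a b c d : X,
    strictP R (fun _ => a) (fun _ => c) → strictP R (fun _ => d) (fun _ => b) →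
    ∀ x : ℕ → X, ∀ i : ℕ, 1 ≤ i → i ≤ T - 1 →
      (R (Function.update (Function.update x i a) (i+1) b)
         (Function.update (Function.update x i c) (i+1) d) ∧
       R (Function.update (Function.update x i c) (i+1) d)
         (Function.update (Function.update x i a) (i+1) b)) →
      R (ebShiftSeq x i a b) (ebShiftSeq x i c d)

namespace MixtureSpace
variable {X : Type*} (M : MixtureSpace X)

lemma mix_zero (x y : X) : M.mix x 0 y = y := by
  rw [M.mix_comm x y 0 (by norm_num)]
  simpa using M.mix_one y x

lemma mix_self (x : X) {l : ℝ} (hl : l ∈ Set.Icc (0:ℝ) 1) : M.mix x l x = x := by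
  have h := M.mix_assoc x x l hl 0 (by norm_num)
  rw [M.mix_zero] at h
  simpa [M.mix_zero] using h

lemma icc_sub {l : ℝ} (hl : l ∈ Set.Icc (0:ℝ) 1) : 1 - l ∈ Set.Icc (0:ℝ) 1 := by
  simp only [Set.mem_Icc] at *; constructor <;> linarith [hl.1, hl.2]

lemma icc_mul {l m : ℝ} (hl : l ∈ Set.Icc (0:ℝ) 1) (hm : m ∈ Set.Icc (0:ℝ) 1) :
    l * m ∈ Set.Icc (0:ℝ) 1 := by
  simp only [Set.mem_Icc] at *
  exact ⟨mul_nonneg hl.1 hm.1, mul_le_one₀ hl.2 hm.1 hm.2⟩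

private lemma mix_dist_aux (x y : X) {l p q : ℝ} (hl : l ∈ Set.Icc (0:ℝ) 1)
    (hp : p ∈ Set.Icc (0:ℝ) 1) (hq : q ∈ Set.Icc (0:ℝ) 1) (hqp : q ≤ p) :
    M.mix (M.mix x p y) l (M.mix x q y) = M.mix x (l * p + (1 - l) * q) y := by
  rcases eq_or_lt_of_le hp.1 with hp0 | hp0
  · have hq0 : q = 0 := le_antisymm (hqp.trans hp0.symm.le) hq.1
    subst hq0
    rw [← hp0, M.mix_zero, M.mix_self _ hl]
    norm_num [M.mix_zero]
  · set c := q / p with hc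
    have hcI : c ∈ Set.Icc (0:ℝ) 1 := by
      constructor
      · exact div_nonneg hq.1 (le_of_lt hp0)
      · rw [div_le_one hp0]; exact hqp
    have h1 : M.mix x q y = M.mix (M.mix x p y) c y := by
      rw [M.mix_assoc x y c hcI p hp]
      congr 1
      have hpne : p ≠ 0 := ne_of_gt hp0
      rw [hc]; field_simp
    have hcI' := icc_sub hcI
    have hlI' := icc_sub hl
    have hprod : (1 - l) * (1 - c) ∈ Set.Icc (0:ℝ) 1 := icc_mul hlI' hcI'
    have hs : 1 - (1 - l) * (1 - c) ∈ Set.Icc (0:ℝ) 1 := icc_sub hprod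
    rw [h1]
    calc M.mix (M.mix x p y) l (M.mix (M.mix x p y) c y)
        = M.mix (M.mix x p y) l (M.mix y (1 - c) (M.mix x p y)) := by
          rw [← M.mix_comm (M.mix x p y) y c hcI]
      _ = M.mix (M.mix y (1 - c) (M.mix x p y)) (1 - l) (M.mix x p y) := by
          rw [← M.mix_comm _ _ l hl]
      _ = M.mix y ((1 - l) * (1 - c)) (M.mix x p y) := by
          rw [M.mix_assoc y (M.mix x p y) (1 - l) hlI' (1 - c) hcI']
      _ = M.mix (M.mix x p y) (1 - (1 - l) * (1 - c)) y := by
          rw [M.mix_comm (M.mix x p y) y (1 - (1 - l) * (1 - c)) hs]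
          norm_num
      _ = M.mix x ((1 - (1 - l) * (1 - c)) * p) y := M.mix_assoc x y _ hs p hp
      _ = M.mix x (l * p + (1 - l) * q) y := by
          congr 1
          have hpne : p ≠ 0 := ne_of_gt hp0
          field_simp [hc]
          have hcp : c * p = q := by rw [hc]; field_simp
          linear_combination (1 - l) * hcp

lemma mix_dist (x y : X) {l p q : ℝ} (hl : l ∈ Set.Icc (0:ℝ) 1)
    (hp : p ∈ Set.Icc (0:ℝ) 1) (hq : q ∈ Set.Icc (0:ℝ) 1) :
    M.mix (M.mix x p y) l (M.mix x q y) = M.mix x (l * p + (1 - l) * q) y := by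
  rcases le_total q p with h | h
  · exact M.mix_dist_aux x y hl hp hq h
  · rw [M.mix_comm (M.mix x p y) (M.mix x q y) l hl,
      M.mix_dist_aux x y (icc_sub hl) hq hp h]
    congr 1; ring

/-- The componentwise product mixture space on `Fin n → X`. -/
def pi (n : ℕ) : MixtureSpace (Fin n → X) where
  mix x l y := fun t => M.mix (x t) l (y t)
  mix_one x y := funext fun t => M.mix_one _ _
  mix_comm x y l hl := funext fun t => M.mix_comm _ _ l hl
  mix_assoc x y l hl m hm := funext fun t => M.mix_assoc _ _ l hl m hm

lemma pi_mix_eq_mixStream {n : ℕ} (x y : Fin n → X) (l : ℝ) :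
    (M.pi n).mix x l y = mixStream M x l y := rfl

end MixtureSpace
open MixtureSpace in
/-- Data for the Herstein–Milnor mixture-space utility theorem. -/
structure HMData (Y : Type*) where
  N : MixtureSpace Y
  S : Y → Y → Prop
  comp : ∀ x y, S x y ∨ S y x
  htrans : ∀ {x y z}, S x y → S y z → S x z
  ind : ∀ x y z : Y, ∀ l ∈ Set.Ioo (0:ℝ) 1, (S x y ↔ S (N.mix x l z) (N.mix y l z))
  cl1 : ∀ x y z : Y, IsClosed {l : ℝ | l ∈ Set.Icc (0:ℝ) 1 ∧ S (N.mix x l z) y}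
  cl2 : ∀ x y z : Y, IsClosed {l : ℝ | l ∈ Set.Icc (0:ℝ) 1 ∧ S y (N.mix x l z)}
  a0 : Y
  b0 : Y
  p0 : S a0 b0 ∧ ¬ S b0 a0

namespace HMData

open MixtureSpace

variable {Y : Type*} (D : HMData Y)

/-- strict preference -/
def P (x y : Y) : Prop := D.S x y ∧ ¬ D.S y x
/-- indifference -/
def I (x y : Y) : Prop := D.S x y ∧ D.S y x

lemma refl (x : Y) : D.S x x := by rcases D.comp x x with h | h <;> exact h

lemma pTransS {x y z : Y} (h : D.P x y) (h2 : D.S y z) : D.P x z :=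
  ⟨D.htrans h.1 h2, fun hz => h.2 (D.htrans h2 hz)⟩

lemma sTransP {x y z : Y} (h : D.S x y) (h2 : D.P y z) : D.P x z :=
  ⟨D.htrans h h2.1, fun hz => h2.2 (D.htrans hz h)⟩

lemma not_S_of_P {x y : Y} (h : D.P x y) : ¬ D.S y x := h.2

lemma S_of_not_S {x y : Y} (h : ¬ D.S y x) : D.S x y := by
  rcases D.comp x y with h' | h'
  · exact h'
  · exact absurd h' h

/-- transfer of weak preference under mixing, `l ∈ [0,1]`. -/
lemma sTransfer {x y : Y} (h : D.S x y) (z : Y) {l : ℝ} (hl : l ∈ Set.Icc (0:ℝ) 1) :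
    D.S (D.N.mix x l z) (D.N.mix y l z) := by
  rcases eq_or_lt_of_le hl.1 with h0 | h0
  · rw [← h0, D.N.mix_zero, D.N.mix_zero]; exact D.refl z
  · rcases eq_or_lt_of_le hl.2 with h1 | h1
    · rw [h1, D.N.mix_one, D.N.mix_one]; exact h
    · exact (D.ind x y z l ⟨h0, h1⟩).1 h

lemma iTransfer {x y : Y} (h : D.I x y) (z : Y) {l : ℝ} (hl : l ∈ Set.Icc (0:ℝ) 1) :
    D.I (D.N.mix x l z) (D.N.mix y l z) :=
  ⟨D.sTransfer h.1 z hl, D.sTransfer h.2 z hl⟩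

lemma pTransfer {x y : Y} (h : D.P x y) (z : Y) {l : ℝ} (hl : l ∈ Set.Ioc (0:ℝ) 1) :
    D.P (D.N.mix x l z) (D.N.mix y l z) := by
  rcases eq_or_lt_of_le hl.2 with h1 | h1
  · rw [h1, D.N.mix_one, D.N.mix_one]; exact h
  · exact ⟨(D.ind x y z l ⟨hl.1, h1⟩).1 h.1, fun hc => h.2 ((D.ind y x z l ⟨hl.1, h1⟩).2 hc)⟩

/-- strict monotonicity along the segment from `y` to `x` when `x ≻ y`. -/
lemma mono {x y : Y} (h : D.P x y) {p q : ℝ} (hp : p ∈ Set.Icc (0:ℝ) 1)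
    (hq : q ∈ Set.Icc (0:ℝ) 1) (hqp : q < p) :
    D.P (D.N.mix x p y) (D.N.mix x q y) := by
  have hp0 : 0 < p := lt_of_le_of_lt hq.1 hqp
  -- step 1 : P (x p y) y
  have step1 : D.P (D.N.mix x p y) y := by
    rcases eq_or_lt_of_le hp.2 with h1 | h1
    · rw [h1, D.N.mix_one]; exact h
    · have := D.pTransfer h y (l := p) ⟨hp0, hp.2⟩
      rwa [D.N.mix_self y hp] at this
  set c := q / p with hc
  have hcI : c ∈ Set.Icc (0:ℝ) 1 := ⟨div_nonneg hq.1 hp0.le, by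
    rw [div_le_one hp0]; exact hqp.le⟩
  have hxq : D.N.mix x q y = D.N.mix (D.N.mix x p y) c y := by
    rw [D.N.mix_assoc x y c hcI p hp]
    congr 1
    have hpne : p ≠ 0 := ne_of_gt hp0
    rw [hc]; field_simp
  rw [hxq]
  set A := D.N.mix x p y
  rcases eq_or_lt_of_le hcI.1 with hc0 | hc0
  · rw [← hc0, D.N.mix_zero]; exact step1
  · have hc1 : c < 1 := by rw [hc, div_lt_one hp0]; exact hqp
    have := D.pTransfer step1 A (l := 1 - c) ⟨by linarith, by linarith⟩
    rw [D.N.mix_self A (icc_sub hcI)] at this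
    rwa [D.N.mix_comm A y c hcI]

lemma monoS {x y : Y} (h : D.P x y) {p q : ℝ} (hp : p ∈ Set.Icc (0:ℝ) 1)
    (hq : q ∈ Set.Icc (0:ℝ) 1) :
    D.S (D.N.mix x p y) (D.N.mix x q y) ↔ q ≤ p := by
  constructor
  · intro hS
    by_contra hlt
    push_neg at hlt
    exact (D.mono h hq hp hlt).2 hS
  · intro hle
    rcases eq_or_lt_of_le hle with heq | hlt
    · rw [heq]; exact D.refl _
    · exact (D.mono h hp hq hlt).1

lemma calib {x y : Y} (h : D.P x y) {p q : ℝ} (hp : p ∈ Set.Icc (0:ℝ) 1)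
    (hq : q ∈ Set.Icc (0:ℝ) 1) (hI : D.I (D.N.mix x p y) (D.N.mix x q y)) : p = q :=
  le_antisymm ((D.monoS h hq hp).1 hI.2) ((D.monoS h hp hq).1 hI.1)

/-- solvability via connectedness. -/
lemma solv {x y z : Y} (hxz : D.S x z) (hzy : D.S z y) :
    ∃ l ∈ Set.Icc (0:ℝ) 1, D.I (D.N.mix x l y) z := by
  have hconn : IsPreconnected (Set.Icc (0:ℝ) 1) := isPreconnected_Icc
  have := isPreconnected_closed_iff.1 hconn
    {l : ℝ | l ∈ Set.Icc (0:ℝ) 1 ∧ D.S (D.N.mix x l y) z}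
    {l : ℝ | l ∈ Set.Icc (0:ℝ) 1 ∧ D.S z (D.N.mix x l y)}
    (D.cl1 x z y) (D.cl2 x z y)
    (fun l hl => by
      rcases D.comp (D.N.mix x l y) z with h | h
      · exact Or.inl ⟨hl, h⟩
      · exact Or.inr ⟨hl, h⟩)
    ⟨1, by norm_num, by norm_num, by rw [D.N.mix_one]; exact hxz⟩
    ⟨0, by norm_num, by norm_num, by rw [D.N.mix_zero]; exact hzy⟩
  obtain ⟨l, _, ⟨hlI, h1⟩, ⟨_, h2⟩⟩ := this
  exact ⟨l, hlI, h1, h2⟩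

end HMData
namespace HMData
open MixtureSpace
variable {Y : Type*} (D : HMData Y)

/-- Order interval. -/
def Box (g b z : Y) : Prop := D.S g z ∧ D.S z b

open Classical in
/-- calibration value of `z` in the box `[b, g]`. -/
noncomputable def theta (g b z : Y) : ℝ :=
  if h : ∃ l ∈ Set.Icc (0:ℝ) 1, D.I (D.N.mix g l b) z then h.choose else 0

lemma theta_spec {g b z : Y} (hz : D.Box g b z) :
    theta D g b z ∈ Set.Icc (0:ℝ) 1 ∧ D.I (D.N.mix g (theta D g b z) b) z := by
  have h : ∃ l ∈ Set.Icc (0:ℝ) 1, D.I (D.N.mix g l b) z := D.solv hz.1 hz.2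
  rw [theta, dif_pos h]
  exact ⟨h.choose_spec.1, h.choose_spec.2⟩

lemma theta_rep {g b : Y} (hgb : D.P g b) {z z' : Y} (hz : D.Box g b z) (hz' : D.Box g b z') :
    (D.S z z' ↔ theta D g b z' ≤ theta D g b z) := by
  obtain ⟨hpI, hpz⟩ := D.theta_spec hz
  obtain ⟨hqI, hqz⟩ := D.theta_spec hz'
  constructor
  · intro hS
    by_contra hlt
    push_neg at hlt
    have hP : D.P (D.N.mix g (theta D g b z') b) (D.N.mix g (theta D g b z) b) :=
      D.mono hgb hqI hpI hlt
    have : D.P z' z := D.pTransS (D.sTransP hqz.2 hP) hpz.1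
    exact this.2 hS
  · intro hle
    have hS : D.S (D.N.mix g (theta D g b z) b) (D.N.mix g (theta D g b z') b) :=
      (D.monoS hgb hpI hqI).2 hle
    exact D.htrans hpz.2 (D.htrans hS hqz.1)

lemma box_mix {g b z z' : Y} (hz : D.Box g b z) (hz' : D.Box g b z') {l : ℝ}
    (hl : l ∈ Set.Icc (0:ℝ) 1) : D.Box g b (D.N.mix z l z') := by
  constructor
  · -- S g (mix z l z')
    have h1 : D.S (D.N.mix g l z') (D.N.mix z l z') := D.sTransfer hz.1 z' hl
    have h2 : D.S g (D.N.mix g l z') := by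
      have := D.sTransfer hz'.1 g (icc_sub hl)
      rw [D.N.mix_self g (icc_sub hl)] at this
      rwa [D.N.mix_comm g z' l hl]
    exact D.htrans h2 h1
  · -- S (mix z l z') b
    have h1 : D.S (D.N.mix z l z') (D.N.mix b l z') := D.sTransfer hz.2 z' hl
    have h2 : D.S (D.N.mix b l z') b := by
      have := D.sTransfer hz'.2 b (icc_sub hl)
      rw [D.N.mix_self b (icc_sub hl)] at this
      rwa [← D.N.mix_comm b z' l hl] at this
    exact D.htrans h1 h2

lemma theta_linear {g b : Y} (hgb : D.P g b) {z z' : Y} (hz : D.Box g b z)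
    (hz' : D.Box g b z') {l : ℝ} (hl : l ∈ Set.Icc (0:ℝ) 1) :
    theta D g b (D.N.mix z l z') = l * theta D g b z + (1 - l) * theta D g b z' := by
  obtain ⟨hpI, hpz⟩ := D.theta_spec hz
  obtain ⟨hqI, hqz⟩ := D.theta_spec hz'
  set p := theta D g b z
  set q := theta D g b z'
  have hm : D.Box g b (D.N.mix z l z') := D.box_mix hz hz' hl
  obtain ⟨hrI, hrz⟩ := D.theta_spec hm
  have hval : l * p + (1 - l) * q ∈ Set.Icc (0:ℝ) 1 := by
    constructor
    · have := mul_nonneg hl.1 hpI.1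
      have := mul_nonneg (icc_sub hl).1 hqI.1
      linarith
    · nlinarith [hl.1, hl.2, hpI.1, hpI.2, hqI.1, hqI.2]
  -- mix z l z' ∼ mix (g p b) l (g q b) = g (lp+(1-l)q) b
  have step1 : D.I (D.N.mix z l z') (D.N.mix (D.N.mix g p b) l z') := by
    have := D.iTransfer ⟨hpz.2, hpz.1⟩ z' hl
    exact ⟨this.1, this.2⟩
  have step2 : D.I (D.N.mix (D.N.mix g p b) l z') (D.N.mix (D.N.mix g p b) l (D.N.mix g q b)) := by
    have h := D.iTransfer ⟨hqz.2, hqz.1⟩ (D.N.mix g p b) (icc_sub hl)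
    rw [D.N.mix_comm (D.N.mix g p b) z' l hl,
        D.N.mix_comm (D.N.mix g p b) (D.N.mix g q b) l hl]
    exact h
  have step3 : D.I (D.N.mix z l z') (D.N.mix g (l * p + (1 - l) * q) b) := by
    rw [← D.N.mix_dist g b hl hpI hqI]
    exact ⟨D.htrans step1.1 step2.1, D.htrans step2.2 step1.2⟩
  have : D.I (D.N.mix g (theta D g b (D.N.mix z l z')) b) (D.N.mix g (l * p + (1 - l) * q) b) :=
    ⟨D.htrans hrz.1 step3.1, D.htrans step3.2 hrz.2⟩
  exact D.calib hgb hrI hval this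

end HMData
namespace HMData
open MixtureSpace
variable {Y : Type*} (D : HMData Y)

lemma box_a0 {g b : Y} (hg : D.S g D.a0) (hb : D.S D.b0 b) : D.Box g b D.a0 :=
  ⟨hg, D.htrans D.p0.1 hb⟩

lemma box_b0 {g b : Y} (hg : D.S g D.a0) (hb : D.S D.b0 b) : D.Box g b D.b0 :=
  ⟨D.htrans hg D.p0.1, hb⟩

lemma pgb {g b : Y} (hg : D.S g D.a0) (hb : D.S D.b0 b) : D.P g b :=
  D.sTransP hg (D.pTransS D.p0 hb)

/-- normalized calibration value, anchored at `a0`, `b0`. -/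
noncomputable def ntheta (g b z : Y) : ℝ :=
  (theta D g b z - theta D g b D.b0) / (theta D g b D.a0 - theta D g b D.b0)

lemma theta_den_pos {g b : Y} (hg : D.S g D.a0) (hb : D.S D.b0 b) :
    theta D g b D.b0 < theta D g b D.a0 := by
  have hrep := D.theta_rep (D.pgb hg hb) (D.box_b0 hg hb) (D.box_a0 hg hb)
  by_contra hle
  push_neg at hle
  exact D.p0.2 (hrep.2 hle)

lemma theta_eq_of_I {g b : Y} (hgb : D.P g b) {z z' : Y} (hz : D.Box g b z)
    (hz' : D.Box g b z') (hI : D.I z z') : theta D g b z = theta D g b z' :=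
  le_antisymm ((D.theta_rep hgb hz' hz).1 hI.2) ((D.theta_rep hgb hz hz').1 hI.1)

lemma theta_case1 {g b : Y} (hg : D.S g D.a0) (hb : D.S D.b0 b) {z : Y}
    (hz : D.Box g b z) {l : ℝ} (hl : l ∈ Set.Icc (0:ℝ) 1)
    (hI : D.I (D.N.mix D.a0 l D.b0) z) :
    theta D g b z = l * theta D g b D.a0 + (1 - l) * theta D g b D.b0 := by
  have hgb := D.pgb hg hb
  have hmix := D.box_mix (D.box_a0 hg hb) (D.box_b0 hg hb) hl
  rw [← D.theta_linear hgb (D.box_a0 hg hb) (D.box_b0 hg hb) hl]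
  exact D.theta_eq_of_I hgb hz hmix ⟨hI.2, hI.1⟩

lemma theta_case2 {g b : Y} (hg : D.S g D.a0) (hb : D.S D.b0 b) {z : Y}
    (hz : D.Box g b z) {m : ℝ} (hm : m ∈ Set.Icc (0:ℝ) 1)
    (hI : D.I (D.N.mix z m D.b0) D.a0) :
    theta D g b D.a0 = m * theta D g b z + (1 - m) * theta D g b D.b0 := by
  have hgb := D.pgb hg hb
  have hmix := D.box_mix hz (D.box_b0 hg hb) hm
  rw [← D.theta_linear hgb hz (D.box_b0 hg hb) hm]
  exact D.theta_eq_of_I hgb (D.box_a0 hg hb) hmix ⟨hI.2, hI.1⟩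

lemma theta_case3 {g b : Y} (hg : D.S g D.a0) (hb : D.S D.b0 b) {z : Y}
    (hz : D.Box g b z) {m : ℝ} (hm : m ∈ Set.Icc (0:ℝ) 1)
    (hI : D.I (D.N.mix D.a0 m z) D.b0) :
    theta D g b D.b0 = m * theta D g b D.a0 + (1 - m) * theta D g b z := by
  have hgb := D.pgb hg hb
  have hmix := D.box_mix (D.box_a0 hg hb) hz hm
  rw [← D.theta_linear hgb (D.box_a0 hg hb) hz hm]
  exact D.theta_eq_of_I hgb (D.box_b0 hg hb) hmix ⟨hI.2, hI.1⟩

/-- the normalized calibration value does not depend on the box. -/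
lemma ntheta_agree {g b g' b' : Y} (hg : D.S g D.a0) (hb : D.S D.b0 b)
    (hg' : D.S g' D.a0) (hb' : D.S D.b0 b') {z : Y} (hz : D.Box g b z)
    (hz' : D.Box g' b' z) :
    ntheta D g b z = ntheta D g' b' z := by
  have hden := D.theta_den_pos hg hb
  have hden' := D.theta_den_pos hg' hb'
  have hdne : theta D g b D.a0 - theta D g b D.b0 ≠ 0 := by linarith
  have hdne' : theta D g' b' D.a0 - theta D g' b' D.b0 ≠ 0 := by linarith
  rcases D.comp D.a0 z with haz | haz
  · rcases D.comp z D.b0 with hzb | hzb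
    · -- b0 ≼ z ≼ a0
      obtain ⟨l, hl, hI⟩ := D.solv haz hzb
      have e1 := D.theta_case1 hg hb hz hl hI
      have e2 := D.theta_case1 hg' hb' hz' hl hI
      rw [ntheta, ntheta, e1, e2]
      rw [div_eq_iff hdne, div_mul_eq_mul_div, eq_div_iff hdne']
      ring
    · -- z ≺ b0
      have hbz : D.S D.b0 z := hzb
      obtain ⟨m, hm, hI⟩ := D.solv D.p0.1 hbz
      have hm1 : m ≠ 1 := by
        intro h
        rw [h, D.N.mix_one] at hI
        exact D.p0.2 hI.2
      have e1 := D.theta_case3 hg hb hz hm hI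
      have e2 := D.theta_case3 hg' hb' hz' hm hI
      have hm1' : (1:ℝ) - m ≠ 0 := by
        intro h
        exact hm1 (by linarith)
      rw [ntheta, ntheta]
      rw [div_eq_div_iff hdne hdne']
      have key : (1 - m) * ((theta D g b z - theta D g b D.b0) *
            (theta D g' b' D.a0 - theta D g' b' D.b0))
          = (1 - m) * ((theta D g' b' z - theta D g' b' D.b0) *
            (theta D g b D.a0 - theta D g b D.b0)) := by
        linear_combination (theta D g b D.a0 - theta D g b D.b0) * e2
          - (theta D g' b' D.a0 - theta D g' b' D.b0) * e1
      exact mul_left_cancel₀ hm1' key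
  · -- a0 ≺ z
    have hza : D.S z D.a0 := haz
    obtain ⟨m, hm, hI⟩ := D.solv hza D.p0.1
    have hm0 : m ≠ 0 := by
      intro h
      rw [h, D.N.mix_zero] at hI
      exact D.p0.2 hI.1
    have e1 := D.theta_case2 hg hb hz hm hI
    have e2 := D.theta_case2 hg' hb' hz' hm hI
    have k1 : m * (theta D g b z - theta D g b D.b0)
        = theta D g b D.a0 - theta D g b D.b0 := by linear_combination -e1
    have k2 : m * (theta D g' b' z - theta D g' b' D.b0)
        = theta D g' b' D.a0 - theta D g' b' D.b0 := by linear_combination -e2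
    rw [ntheta, ntheta, div_eq_div_iff hdne hdne']
    have key : m * ((theta D g b z - theta D g b D.b0) *
          (theta D g' b' D.a0 - theta D g' b' D.b0))
        = m * ((theta D g' b' z - theta D g' b' D.b0) *
          (theta D g b D.a0 - theta D g b D.b0)) := by
      linear_combination (theta D g' b' D.a0 - theta D g' b' D.b0) * k1
        - (theta D g b D.a0 - theta D g b D.b0) * k2
    exact mul_left_cancel₀ hm0 key

end HMData
namespace HMData
open MixtureSpace
variable {Y : Type*} (D : HMData Y)

open Classical in
noncomputable def top (z : Y) : Y := if D.S z D.a0 then z else D.a0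
open Classical in
noncomputable def bot (z : Y) : Y := if D.S D.b0 z then z else D.b0

lemma top_spec (z : Y) : D.S (D.top z) z ∧ D.S (D.top z) D.a0 := by
  rw [top]
  split
  · exact ⟨D.refl z, by assumption⟩
  · exact ⟨D.S_of_not_S (by assumption), D.refl D.a0⟩

lemma bot_spec (z : Y) : D.S z (D.bot z) ∧ D.S D.b0 (D.bot z) := by
  rw [bot]
  split
  · exact ⟨D.refl z, by assumption⟩
  · exact ⟨D.S_of_not_S (by assumption), D.refl D.b0⟩

lemma box_self (z : Y) : D.Box (D.top z) (D.bot z) z :=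
  ⟨(D.top_spec z).1, (D.bot_spec z).1⟩

/-- The global utility function. -/
noncomputable def U (z : Y) : ℝ := ntheta D (D.top z) (D.bot z) z

lemma U_eq {g b z : Y} (hg : D.S g D.a0) (hb : D.S D.b0 b) (hz : D.Box g b z) :
    D.U z = ntheta D g b z :=
  D.ntheta_agree (D.top_spec z).2 (D.bot_spec z).2 hg hb (D.box_self z) hz

open Classical in
/-- common box for two elements -/
noncomputable def top2 (x y : Y) : Y := if D.S (D.top x) (D.top y) then D.top x else D.top y
open Classical in
noncomputable def bot2 (x y : Y) : Y := if D.S (D.bot x) (D.bot y) then D.bot y else D.bot x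

lemma top2_spec (x y : Y) : D.S (D.top2 x y) x ∧ D.S (D.top2 x y) y ∧ D.S (D.top2 x y) D.a0 := by
  rw [top2]
  split
  · refine ⟨(D.top_spec x).1, D.htrans (by assumption) (D.top_spec y).1, (D.top_spec x).2⟩
  · have h := D.S_of_not_S (by assumption)
    exact ⟨D.htrans h (D.top_spec x).1, (D.top_spec y).1, (D.top_spec y).2⟩

lemma bot2_spec (x y : Y) : D.S x (D.bot2 x y) ∧ D.S y (D.bot2 x y) ∧ D.S D.b0 (D.bot2 x y) := by
  rw [bot2]
  split
  · refine ⟨D.htrans (D.bot_spec x).1 (by assumption), (D.bot_spec y).1, (D.bot_spec y).2⟩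
  · have h := D.S_of_not_S (by assumption)
    exact ⟨(D.bot_spec x).1, D.htrans (D.bot_spec y).1 h, (D.bot_spec x).2⟩

lemma U_rep (x y : Y) : D.S x y ↔ D.U y ≤ D.U x := by
  set g := D.top2 x y
  set b := D.bot2 x y
  obtain ⟨hgx, hgy, hga⟩ := D.top2_spec x y
  obtain ⟨hbx, hby, hbb⟩ := D.bot2_spec x y
  have hboxx : D.Box g b x := ⟨hgx, hbx⟩
  have hboxy : D.Box g b y := ⟨hgy, hby⟩
  rw [D.U_eq hga hbb hboxx, D.U_eq hga hbb hboxy]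
  have hden := D.theta_den_pos hga hbb
  rw [D.theta_rep (D.pgb hga hbb) hboxx hboxy, ntheta, ntheta,
    div_le_div_iff_of_pos_right (by linarith : (0:ℝ) < theta D g b D.a0 - theta D g b D.b0)]
  constructor <;> intro h <;> linarith

lemma U_linear (x y : Y) {l : ℝ} (hl : l ∈ Set.Icc (0:ℝ) 1) :
    D.U (D.N.mix x l y) = l * D.U x + (1 - l) * D.U y := by
  set g := D.top2 x y
  set b := D.bot2 x y
  obtain ⟨hgx, hgy, hga⟩ := D.top2_spec x y
  obtain ⟨hbx, hby, hbb⟩ := D.bot2_spec x y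
  have hboxx : D.Box g b x := ⟨hgx, hbx⟩
  have hboxy : D.Box g b y := ⟨hgy, hby⟩
  have hboxm : D.Box g b (D.N.mix x l y) := D.box_mix hboxx hboxy hl
  rw [D.U_eq hga hbb hboxx, D.U_eq hga hbb hboxy, D.U_eq hga hbb hboxm]
  rw [ntheta, ntheta, ntheta, D.theta_linear (D.pgb hga hbb) hboxx hboxy hl]
  have hden := D.theta_den_pos hga hbb
  field_simp
  ring

end HMData
section Affine
open MixtureSpace
variable {X : Type*} (M : MixtureSpace X)

lemma affine_of_linear {u v : X → ℝ} (hu : M.linear u) (hv : M.linear v)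
    (hmono : ∀ a c : X, u c ≤ u a → v c ≤ v a) {A B : X} (hAB : u B < u A) (c : X) :
    v c - v B = ((v A - v B) / (u A - u B)) * (u c - u B) := by
  have hne : u A - u B ≠ 0 := by linarith
  have hequ : ∀ a c : X, u a = u c → v a = v c := fun a c h =>
    le_antisymm (hmono c a h.le) (hmono a c h.ge)
  rcases le_or_gt (u c) (u A) with hcA | hcA
  · rcases le_or_gt (u B) (u c) with hBc | hBc
    · -- u B ≤ u c ≤ u A
      set l := (u c - u B) / (u A - u B) with hl
      have hlI : l ∈ Set.Icc (0:ℝ) 1 :=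
        ⟨div_nonneg (by linarith) (by linarith), by rw [hl, div_le_one (by linarith)]; linarith⟩
      have h1 : u (M.mix A l B) = u c := by
        rw [hu A B l hlI, hl]; field_simp; ring
      have h2 : v c = l * v A + (1 - l) * v B := by
        rw [← hv A B l hlI]; exact (hequ _ _ h1).symm
      rw [h2, hl]; field_simp; ring
    · -- u c < u B
      set m := (u B - u c) / (u A - u c) with hm
      have hden2 : (0:ℝ) < u A - u c := by linarith
      have hmI : m ∈ Set.Icc (0:ℝ) 1 :=
        ⟨div_nonneg (by linarith) (by linarith), by rw [hm, div_le_one hden2]; linarith⟩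
      have hmeq : m * (u A - u c) = u B - u c := by rw [hm]; field_simp
      have h1 : u (M.mix A m c) = u B := by
        rw [hu A c m hmI]; linear_combination hmeq
      have h2 : v B = m * v A + (1 - m) * v c := by
        rw [← hv A c m hmI]; exact hequ _ _ h1.symm
      rw [div_mul_eq_mul_div, eq_div_iff hne]
      linear_combination (u c - u A) * h2 + (v c - v A) * hmeq
  · -- u A < u c
    set m := (u A - u B) / (u c - u B) with hm
    have hden2 : (0:ℝ) < u c - u B := by linarith
    have hmI : m ∈ Set.Icc (0:ℝ) 1 :=
      ⟨div_nonneg (by linarith) (by linarith), by rw [hm, div_le_one hden2]; linarith⟩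
    have hmeq : m * (u c - u B) = u A - u B := by rw [hm]; field_simp
    have h1 : u (M.mix c m B) = u A := by
      rw [hu c B m hmI]; linear_combination hmeq
    have h2 : v A = m * v c + (1 - m) * v B := by
      rw [← hv c B m hmI]; exact hequ _ _ h1.symm
    rw [div_mul_eq_mul_div, eq_div_iff hne]
    linear_combination (u B - u c) * h2 + (v B - v c) * hmeq

end Affine
section Forward
open MixtureSpace

variable {X : Type*}

private def estream (bstar : X) {n : ℕ} (t : Fin n) (a : X) : Fin n → X :=
  fun s => if s = t then a else bstar

lemma aa_forward (M : MixtureSpace X) (n : ℕ) (hn : 0 < n)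
    (R : (Fin n → X) → (Fin n → X) → Prop)
    (h1 : AxF1 R) (h2 : AxF2 R) (h3 : AxF3 M R) (h4 : AxF4 M R) (h5 : AxF5 R) :
    ∃ (u : X → ℝ) (w : Fin n → ℝ), AARep M R u w := by
  classical
  obtain ⟨astar, bstar, hstar⟩ := h2
  set D : HMData (Fin n → X) :=
    { N := M.pi n
      S := R
      comp := h1.1
      htrans := fun hxy hyz => h1.2 hxy hyz
      ind := h3
      cl1 := fun x y z => (h4 x y z).1
      cl2 := fun x y z => (h4 x y z).2
      a0 := fun _ => astar
      b0 := fun _ => bstar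
      p0 := hstar } with hD
  have hSR : ∀ x y, D.S x y ↔ R x y := fun x y => Iff.rfl
  set u : X → ℝ := fun c => D.U (fun _ => c) with hu
  have hconst : ∀ (a c : X) (l : ℝ),
      (fun _ : Fin n => M.mix a l c) = (M.pi n).mix (fun _ => a) l (fun _ => c) := by
    intro a c l; funext t; rfl
  have hu_lin : M.linear u := by
    intro a c l hl
    show D.U (fun _ => M.mix a l c) = _
    rw [hconst a c l, D.U_linear _ _ hl]
  have hu_rep : ∀ a c : X, R (fun _ => a) (fun _ => c) ↔ u c ≤ u a := fun a c =>
    D.U_rep (fun _ => a) (fun _ => c)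
  have hABu : u bstar < u astar := by
    have h := hstar.2
    rw [hu_rep bstar astar] at h
    linarith [not_le.1 h]
  set v : Fin n → X → ℝ := fun t a => D.U (estream bstar t a) with hv
  have he_mix : ∀ (t : Fin n) (a c : X) (l : ℝ), l ∈ Set.Icc (0:ℝ) 1 →
      estream bstar t (M.mix a l c) = (M.pi n).mix (estream bstar t a) l (estream bstar t c) := by
    intro t a c l hl
    funext s
    show _ = M.mix (estream bstar t a s) l (estream bstar t c s)
    by_cases h : s = t
    · simp [estream, h]
    · simp [estream, h, M.mix_self bstar hl]
  have hv_lin : ∀ t, M.linear (v t) := by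
    intro t a c l hl
    show D.U (estream bstar t (M.mix a l c)) = _
    rw [he_mix t a c l hl, D.U_linear _ _ hl]
  have hv_mono : ∀ (t : Fin n) (a c : X), u c ≤ u a → v t c ≤ v t a := by
    intro t a c h
    rw [← hu_rep a c] at h
    have : R (estream bstar t a) (estream bstar t c) := by
      apply h5
      intro s
      by_cases hs : s = t
      · simpa [estream, hs] using h
      · simp only [estream, if_neg hs]
        exact D.refl (fun _ => bstar)
    exact (D.U_rep _ _).1 this
  set w : Fin n → ℝ := fun t => (v t astar - v t bstar) / (u astar - u bstar) with hw
  have hw_nonneg : ∀ t, 0 ≤ w t := fun t =>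
    div_nonneg (by linarith [hv_mono t astar bstar hABu.le]) (by linarith)
  have haffine : ∀ (t : Fin n) (c : X), v t c - v t bstar = w t * (u c - u bstar) :=
    fun t c => affine_of_linear M hu_lin (hv_lin t) (hv_mono t) hABu c
  have he_bstar : ∀ t : Fin n, estream bstar t bstar = (fun _ => bstar) := by
    intro t; funext s; simp [estream]
  set c0 : ℝ := D.U (fun _ => bstar) with hc0
  have hv_bstar : ∀ t, v t bstar = c0 := by
    intro t; show D.U _ = _; rw [he_bstar t]
  -- telescope
  have tele : ∀ (x : Fin n → X) (k : ℕ),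
      D.U (fun t => if (t : ℕ) < k then x t else bstar) =
        c0 + ∑ t ∈ Finset.univ.filter (fun t : Fin n => (t : ℕ) < k), (v t (x t) - c0) := by
    intro x k
    induction k with
    | zero =>
      have hfun : (fun t : Fin n => if (t : ℕ) < 0 then x t else bstar) = (fun _ => bstar) := by
        funext t; simp
      rw [hfun]
      simp [hc0]
    | succ k ih =>
      by_cases hk : k < n
      · set tk : Fin n := ⟨k, hk⟩ with htk
        have hmixeq : (M.pi n).mix (fun t => if (t : ℕ) < k + 1 then x t else bstar) (1/2)
              (fun _ => bstar)
            = (M.pi n).mix (fun t => if (t : ℕ) < k then x t else bstar) (1/2)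
              (estream bstar tk (x tk)) := by
          funext t
          show M.mix (if (t : ℕ) < k + 1 then x t else bstar) (1/2) bstar
            = M.mix (if (t : ℕ) < k then x t else bstar) (1/2) (estream bstar tk (x tk) t)
          rcases lt_trichotomy (t : ℕ) k with h | h | h
          · have ht1 : (t : ℕ) < k + 1 := by omega
            have htne : t ≠ tk := by
              intro hcon; rw [hcon] at h; exact absurd h (lt_irrefl _)
            simp [estream, h, ht1, htne]
          · have hteq : t = tk := by apply Fin.ext; simpa using h
            have ht1 : (t : ℕ) < k + 1 := by omega
            have ht2 : ¬ (t : ℕ) < k := by omega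
            have e1 : (if (t : ℕ) < k + 1 then x t else bstar) = x t := if_pos ht1
            have e2 : (if (t : ℕ) < k then x t else bstar) = bstar := if_neg ht2
            have e3 : estream bstar tk (x tk) t = x tk := by simp [estream, hteq]
            rw [e1, e2, e3, hteq, M.mix_comm bstar (x tk) (1/2) (by norm_num)]
            norm_num
          · have ht1 : ¬ (t : ℕ) < k + 1 := by omega
            have ht2 : ¬ (t : ℕ) < k := by omega
            have htne : t ≠ tk := by
              intro hcon
              have : (t : ℕ) = k := by rw [hcon]
              omega
            simp [estream, ht1, ht2, htne]
        have h2 := congrArg D.U hmixeq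
        rw [D.U_linear _ _ (by norm_num : (1:ℝ)/2 ∈ Set.Icc 0 1),
            D.U_linear _ _ (by norm_num : (1:ℝ)/2 ∈ Set.Icc 0 1)] at h2
        have hfil : Finset.univ.filter (fun t : Fin n => (t : ℕ) < k + 1)
            = insert tk (Finset.univ.filter (fun t : Fin n => (t : ℕ) < k)) := by
          ext t
          simp only [Finset.mem_filter, Finset.mem_univ, true_and, Finset.mem_insert]
          constructor
          · intro h
            rcases Nat.lt_succ_iff_lt_or_eq.1 h with h' | h'
            · exact Or.inr h'
            · exact Or.inl (Fin.ext h')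
          · rintro (h | h)
            · rw [h]; simp [htk]
            · omega
        rw [hfil, Finset.sum_insert (by simp [htk])]
        have hvtk : v tk (x tk) = D.U (estream bstar tk (x tk)) := rfl
        rw [← hc0] at h2
        linarith [h2, ih]
      · have heq : (fun t : Fin n => if (t : ℕ) < k + 1 then x t else bstar)
            = (fun t : Fin n => if (t : ℕ) < k then x t else bstar) := by
          funext t
          have h1 : (t : ℕ) < k := by have := t.isLt; omega
          simp [h1, Nat.lt_succ_of_lt h1]
        have hfil : Finset.univ.filter (fun t : Fin n => (t : ℕ) < k + 1)
            = Finset.univ.filter (fun t : Fin n => (t : ℕ) < k) := by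
          ext t
          simp only [Finset.mem_filter, Finset.mem_univ, true_and]
          have := t.isLt; omega
        rw [heq, hfil]
        exact ih
  -- assemble the additive representation
  have hUx : ∀ x : Fin n → X,
      D.U x = c0 - (∑ t : Fin n, w t * u bstar) + ∑ t : Fin n, w t * u (x t) := by
    intro x
    have h := tele x n
    have hfun : (fun t : Fin n => if (t : ℕ) < n then x t else bstar) = x := by
      funext t; simp [t.isLt]
    have hfil : Finset.univ.filter (fun t : Fin n => (t : ℕ) < n) = Finset.univ := by
      ext t; simp [t.isLt]
    rw [hfun, hfil] at h
    rw [h]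
    have hterm : ∀ t : Fin n, v t (x t) - c0 = w t * u (x t) - w t * u bstar := by
      intro t
      have h' := haffine t (x t)
      rw [hv_bstar t] at h'
      linarith [h']
    rw [Finset.sum_congr rfl (fun t _ => hterm t), Finset.sum_sub_distrib]
    ring
  have hrep : ∀ x y : Fin n → X,
      R x y ↔ (∑ t : Fin n, w t * u (x t)) ≥ ∑ t : Fin n, w t * u (y t) := by
    intro x y
    have h : R x y ↔ D.U y ≤ D.U x := D.U_rep x y
    rw [hUx x, hUx y] at h
    rw [h]
    simp only [ge_iff_le]
    constructor <;> intro <;> linarith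
  have hw_pos : ∃ t, 0 < w t := by
    by_contra hcon
    push_neg at hcon
    have hz : ∀ t, w t = 0 := fun t => le_antisymm (hcon t) (hw_nonneg t)
    apply hstar.2
    rw [hrep]
    simp [hz]
  exact ⟨u, w, hu_lin, ⟨astar, bstar, ne_of_gt hABu⟩, hw_nonneg, hw_pos, hrep⟩

end Forward
section Converse
open MixtureSpace

variable {X : Type*}

lemma aa_converse (M : MixtureSpace X) (n : ℕ) (hn : 0 < n)
    (R : (Fin n → X) → (Fin n → X) → Prop) (u : X → ℝ) (w : Fin n → ℝ)
    (hAA : AARep M R u w) :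
    AxF1 R ∧ AxF2 R ∧ AxF3 M R ∧ AxF4 M R ∧ AxF5 R := by
  obtain ⟨hu_lin, ⟨a, b, hab⟩, hw_nonneg, hw_pos, hrep⟩ := hAA
  set su : (Fin n → X) → ℝ := fun x => ∑ t : Fin n, w t * u (x t) with hsu
  have hrep' : ∀ x y, R x y ↔ su y ≤ su x := fun x y => hrep x y
  have hW : 0 < ∑ t : Fin n, w t := by
    obtain ⟨t0, ht0⟩ := hw_pos
    exact Finset.sum_pos' (fun t _ => hw_nonneg t) ⟨t0, Finset.mem_univ t0, ht0⟩
  have hsconst : ∀ c : X, su (fun _ => c) = (∑ t : Fin n, w t) * u c := by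
    intro c
    rw [hsu, Finset.sum_mul]
  have hmixsum : ∀ (x z : Fin n → X) (l : ℝ), l ∈ Set.Icc (0:ℝ) 1 →
      su (mixStream M x l z) = l * su x + (1 - l) * su z := by
    intro x z l hl
    rw [hsu]
    show (∑ t : Fin n, w t * u (M.mix (x t) l (z t))) = _
    rw [Finset.mul_sum, Finset.mul_sum, ← Finset.sum_add_distrib]
    refine Finset.sum_congr rfl fun t _ => ?_
    rw [hu_lin (x t) (z t) l hl]
    ring
  refine ⟨⟨fun x y => ?_, fun x y z hxy hyz => ?_⟩, ?_, ?_, ?_, ?_⟩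
  · rcases le_total (su y) (su x) with h | h
    · exact Or.inl ((hrep' x y).2 h)
    · exact Or.inr ((hrep' y x).2 h)
  · rw [hrep'] at *
    exact le_trans hyz hxy
  · -- F2
    rcases lt_or_gt_of_ne hab with h | h
    · refine ⟨b, a, (hrep' _ _).2 ?_, fun hc => ?_⟩
      · rw [hsconst, hsconst]
        exact mul_le_mul_of_nonneg_left h.le hW.le
      · rw [hrep' _ _, hsconst, hsconst] at hc
        have := (mul_le_mul_iff_right₀ hW).1 hc
        linarith
    · refine ⟨a, b, (hrep' _ _).2 ?_, fun hc => ?_⟩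
      · rw [hsconst, hsconst]
        exact mul_le_mul_of_nonneg_left h.le hW.le
      · rw [hrep' _ _, hsconst, hsconst] at hc
        have := (mul_le_mul_iff_right₀ hW).1 hc
        linarith
  · -- F3
    intro x y z l hl
    rw [hrep', hrep', hmixsum x z l ⟨hl.1.le, hl.2.le⟩, hmixsum y z l ⟨hl.1.le, hl.2.le⟩]
    constructor
    · intro h
      have := mul_le_mul_of_nonneg_left h hl.1.le
      linarith
    · intro h
      have : l * su y ≤ l * su x := by linarith
      exact le_of_mul_le_mul_left this hl.1
  · -- F4
    intro x y z
    constructor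
    · have hset : {l : ℝ | l ∈ Set.Icc (0:ℝ) 1 ∧ R (mixStream M x l z) y}
          = Set.Icc (0:ℝ) 1 ∩ {l : ℝ | su y ≤ l * su x + (1 - l) * su z} := by
        ext l
        simp only [Set.mem_setOf_eq, Set.mem_inter_iff, Set.mem_Icc]
        constructor
        · rintro ⟨hl, h⟩
          rw [hrep', hmixsum x z l hl] at h
          exact ⟨hl, h⟩
        · rintro ⟨hl, h⟩
          exact ⟨hl, (hrep' _ _).2 (by rw [hmixsum x z l hl]; exact h)⟩
      rw [hset]
      exact isClosed_Icc.inter (isClosed_le continuous_const (by fun_prop))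
    · have hset : {l : ℝ | l ∈ Set.Icc (0:ℝ) 1 ∧ R y (mixStream M x l z)}
          = Set.Icc (0:ℝ) 1 ∩ {l : ℝ | l * su x + (1 - l) * su z ≤ su y} := by
        ext l
        simp only [Set.mem_setOf_eq, Set.mem_inter_iff, Set.mem_Icc]
        constructor
        · rintro ⟨hl, h⟩
          rw [hrep', hmixsum x z l hl] at h
          exact ⟨hl, h⟩
        · rintro ⟨hl, h⟩
          exact ⟨hl, (hrep' _ _).2 (by rw [hmixsum x z l hl]; exact h)⟩
      rw [hset]
      exact isClosed_Icc.inter (isClosed_le (by fun_prop) continuous_const)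
  · -- F5
    intro x y h
    rw [hrep']
    apply Finset.sum_le_sum
    intro t _
    have ht := (hrep' _ _).1 (h t)
    rw [hsconst, hsconst] at ht
    have := (mul_le_mul_iff_right₀ hW).1 ht
    exact mul_le_mul_of_nonneg_left this (hw_nonneg t)

end Converse


/-- The AA representation theorem on `X^n` (finite horizon):
`≽` satisfies F1–F5 iff it has an AA representation. -/
theorem aa_representation_finite {X : Type*} (M : MixtureSpace X) (n : ℕ) (hn : 0 < n)
    (R : (Fin n → X) → (Fin n → X) → Prop) :
    (AxF1 R ∧ AxF2 R ∧ AxF3 M R ∧ AxF4 M R ∧ AxF5 R) ↔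
    ∃ (u : X → ℝ) (w : Fin n → ℝ), AARep M R u w := by
  constructor
  · rintro ⟨h1, h2, h3, h4, h5⟩
    exact aa_forward M n hn R h1 h2 h3 h4 h5
  · rintro ⟨u, w, hAA⟩
    exact aa_converse M n hn R u w hAA
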